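/- Fix k ≥ 1 and γ ∈ (0, 1 − 1/n). Suppose that for every s ∈ {1,…,k} the error satisfies 0 < ε_s ≤ 1 − 1/n − γ and α_s is given by the formula α_s = (1/(2(n−1)))·log((n−1)(1−ε_s)/ε_s). Then Π_{s=1}^k Z_s ≤ φ(1 − 1/n − γ)^k. -/

import Mathlib

open Finset

noncomputable section

variable {P A : Type*}

/-- The multiplicative weight factor `exp(−α·[(n−1)·𝟙(h(p)=y(p)) − 𝟙(h(p)≠y(p))])`. -/
def wfac [DecidableEq A] (n : ℕ) (αs : ℝ) (hs y : P → A) (p : P) : ℝ :=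
  Real.exp (-(αs * (((n : ℝ) - 1) * (if hs p = y p then 1 else 0) -
    (if hs p = y p then 0 else 1))))

/-- The weight sequence: `dseq n α h y s` is the distribution `d_s` (for `s ≥ 1`),
with `d_1` uniform and `d_{s+1}(p) = d_s(p)·wfac(α_s,h_s)(p) / Z_s`. -/
def dseq [Fintype P] [DecidableEq A] (n : ℕ) (α : ℕ → ℝ) (h : ℕ → P → A) (y : P → A) :
    ℕ → P → ℝ
  | 0 => fun _ => 1 / (Fintype.card P : ℝ)
  | 1 => fun _ => 1 / (Fintype.card P : ℝ)
  | (s + 2) => fun p =>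
      dseq n α h y (s + 1) p * wfac n (α (s + 1)) (h (s + 1)) y p /
        ∑ q, dseq n α h y (s + 1) q * wfac n (α (s + 1)) (h (s + 1)) y q

/-- The normalizer `Z_s = Σ_p d_s(p)·exp(−α_s·[(n−1)·𝟙(h_s(p)=y(p)) − 𝟙(h_s(p)≠y(p))])`. -/
def Zseq [Fintype P] [DecidableEq A] (n : ℕ) (α : ℕ → ℝ) (h : ℕ → P → A) (y : P → A)
    (s : ℕ) : ℝ :=
  ∑ q, dseq n α h y s q * wfac n (α s) (h s) y q

/-- `F^k_a(p) = Σ_{s=1}^k α_s·𝟙[h_s(p)=a]`. -/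
def Fsc [DecidableEq A] (α : ℕ → ℝ) (h : ℕ → P → A) (k : ℕ) (a : A) (p : P) : ℝ :=
  ∑ s ∈ Finset.Icc 1 k, α s * (if h s p = a then 1 else 0)

/-- `Ψ^k_a(p) = (n−1)·F^k_a(p) − Σ_{a'≠a} F^k_{a'}(p)` where `n = |A|`. -/
def Psi [Fintype A] [DecidableEq A] (α : ℕ → ℝ) (h : ℕ → P → A) (k : ℕ) (a : A) (p : P) : ℝ :=
  ((Fintype.card A : ℝ) - 1) * Fsc α h k a p - ∑ a' ∈ Finset.univ.erase a, Fsc α h k a' p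

/-- The error `ε_s = Σ_{p : h_s(p)≠y(p)} d_s(p)`. -/
def err [Fintype P] [DecidableEq A] (n : ℕ) (α : ℕ → ℝ) (h : ℕ → P → A) (y : P → A)
    (s : ℕ) : ℝ :=
  ∑ p ∈ Finset.univ.filter (fun p => h s p ≠ y p), dseq n α h y s p

/-- `φ(ε) = (n−1)^{−1/2}·ε^{1/2}·(1−ε)^{1/2}
      + (n−1)^{1/(2(n−1))}·(1−ε)^{1/(2(n−1))}·ε^{1−1/(2(n−1))}`. -/
def phi (n : ℕ) (ε : ℝ) : ℝ :=
  ((n : ℝ) - 1) ^ (-(1 / 2) : ℝ) * ε ^ ((1 : ℝ) / 2) * (1 - ε) ^ ((1 : ℝ) / 2) +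
    ((n : ℝ) - 1) ^ (1 / (2 * ((n : ℝ) - 1))) * (1 - ε) ^ (1 / (2 * ((n : ℝ) - 1))) *
      ε ^ (1 - 1 / (2 * ((n : ℝ) - 1)))


lemma wfac_pos [DecidableEq A] (n : ℕ) (αs : ℝ) (hs y : P → A) (p : P) :
    0 < wfac n αs hs y p := Real.exp_pos _

lemma dseq_nonneg [Fintype P] [DecidableEq A] (n : ℕ) (α : ℕ → ℝ) (h : ℕ → P → A)
    (y : P → A) : ∀ s p, 0 ≤ dseq n α h y s p
  | 0, p => by simp only [dseq]; positivity
  | 1, p => by simp only [dseq]; positivity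
  | (s+2), p => by
      simp only [dseq]
      apply div_nonneg
      · exact mul_nonneg (dseq_nonneg n α h y (s+1) p) (wfac_pos ..).le
      · exact Finset.sum_nonneg fun q _ =>
          mul_nonneg (dseq_nonneg n α h y (s+1) q) (wfac_pos ..).le

lemma dseq_sum_eq_one [Fintype P] [Nonempty P] [DecidableEq A] (n : ℕ) (α : ℕ → ℝ)
    (h : ℕ → P → A) (y : P → A) : ∀ s, ∑ p, dseq n α h y s p = 1
  | 0 => by
      simp only [dseq, Finset.sum_const, Finset.card_univ, nsmul_eq_mul]
      rw [mul_one_div, div_self]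
      exact_mod_cast Fintype.card_ne_zero
  | 1 => by
      simp only [dseq, Finset.sum_const, Finset.card_univ, nsmul_eq_mul]
      rw [mul_one_div, div_self]
      exact_mod_cast Fintype.card_ne_zero
  | (s+2) => by
      have hprev := dseq_sum_eq_one n α h y (s+1)
      have hZpos : 0 < ∑ q, dseq n α h y (s+1) q * wfac n (α (s+1)) (h (s+1)) y q := by
        obtain ⟨q, -, hq⟩ := Finset.exists_lt_of_sum_lt (f := fun _ : P => (0:ℝ))
          (g := fun q => dseq n α h y (s+1) q) (by rw [hprev]; simp)
        exact lt_of_lt_of_le (mul_pos hq (wfac_pos ..))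
          (Finset.single_le_sum (f := fun q => dseq n α h y (s+1) q * wfac n (α (s+1)) (h (s+1)) y q)
            (fun q _ => mul_nonneg (dseq_nonneg n α h y (s+1) q) (wfac_pos ..).le)
            (Finset.mem_univ q))
      simp only [dseq]
      rw [← Finset.sum_div, div_self hZpos.ne']

lemma Zseq_eq [Fintype P] [Nonempty P] [DecidableEq A] (n : ℕ) (α : ℕ → ℝ)
    (h : ℕ → P → A) (y : P → A) (s : ℕ) :
    Zseq n α h y s = (1 - err n α h y s) * Real.exp (-(α s * ((n:ℝ) - 1)))
      + err n α h y s * Real.exp (α s) := by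
  have hsum := dseq_sum_eq_one n α h y s
  have hsplit := Finset.sum_filter_add_sum_filter_not Finset.univ
    (fun p => h s p = y p) (fun p => dseq n α h y s p)
  unfold Zseq err
  rw [← Finset.sum_filter_add_sum_filter_not Finset.univ (fun p => h s p = y p)]
  have h1 : ∑ q ∈ Finset.univ.filter (fun p => h s p = y p),
      dseq n α h y s q * wfac n (α s) (h s) y q
      = (∑ q ∈ Finset.univ.filter (fun p => h s p = y p), dseq n α h y s q)
        * Real.exp (-(α s * ((n:ℝ) - 1))) := by
    rw [Finset.sum_mul]
    refine Finset.sum_congr rfl fun q hq => ?_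
    simp only [Finset.mem_filter] at hq
    simp only [wfac, hq.2, if_pos]
    ring_nf
  have h2 : ∑ q ∈ Finset.univ.filter (fun p => ¬ h s p = y p),
      dseq n α h y s q * wfac n (α s) (h s) y q
      = (∑ q ∈ Finset.univ.filter (fun p => ¬ h s p = y p), dseq n α h y s q)
        * Real.exp (α s) := by
    rw [Finset.sum_mul]
    refine Finset.sum_congr rfl fun q hq => ?_
    simp only [Finset.mem_filter] at hq
    simp only [wfac, hq.2, if_neg, if_false]
    ring_nf
  rw [h1, h2]
  have hcorrect : (∑ q ∈ Finset.univ.filter (fun p => h s p = y p), dseq n α h y s q)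
      = 1 - ∑ p ∈ Finset.univ.filter (fun p => h s p ≠ y p), dseq n α h y s p := by
    rw [← hsum, ← hsplit]; ring_nf
  rw [hcorrect]

/-- Monotonicity of the value `(1-ε)e^{-αm} + εe^{α}` at `α = (1/2m)log(m(1-ε)/ε)`. -/
lemma key_mono (m : ℝ) (hm : 1 ≤ m) (ε ε₀ : ℝ) (h0 : 0 < ε) (hle : ε ≤ ε₀)
    (hub : ε₀ * (m + 1) ≤ m) :
    (1 - ε) * Real.exp (-(1 / (2 * m) * Real.log (m * (1 - ε) / ε) * m))
      + ε * Real.exp (1 / (2 * m) * Real.log (m * (1 - ε) / ε))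
    ≤ (1 - ε₀) * Real.exp (-(1 / (2 * m) * Real.log (m * (1 - ε₀) / ε₀) * m))
      + ε₀ * Real.exp (1 / (2 * m) * Real.log (m * (1 - ε₀) / ε₀)) := by
  have hm0 : (0:ℝ) < m := by linarith
  have h0' : 0 < ε₀ := lt_of_lt_of_le h0 hle
  have hε₀1 : ε₀ < 1 := by nlinarith
  have hε1 : ε < 1 := lt_of_le_of_lt hle hε₀1
  have hr : 0 < m * (1 - ε) / ε := by
    apply div_pos (mul_pos hm0 (by linarith)) h0
  have hr₀ : 0 < m * (1 - ε₀) / ε₀ := by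
    apply div_pos (mul_pos hm0 (by linarith)) h0'
  have hr₀1 : 1 ≤ m * (1 - ε₀) / ε₀ := by
    rw [le_div_iff₀ h0']; nlinarith
  have hrr : m * (1 - ε₀) / ε₀ ≤ m * (1 - ε) / ε := by
    rw [div_le_div_iff₀ h0' h0]; nlinarith
  have hr1 : 1 ≤ m * (1 - ε) / ε := le_trans hr₀1 hrr
  set a : ℝ := 1 / (2 * m) * Real.log (m * (1 - ε) / ε) with ha
  set b : ℝ := 1 / (2 * m) * Real.log (m * (1 - ε₀) / ε₀) with hb
  have hb0 : 0 ≤ b := mul_nonneg (by positivity) (Real.log_nonneg hr₀1)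
  have hab : b ≤ a := by
    apply mul_le_mul_of_nonneg_left _ (by positivity)
    exact Real.log_le_log hr₀ hrr
  -- step 1 : value at a (for weight ε) ≤ value at b (for weight ε)
  have hea : ε * Real.exp (a * (m + 1)) ≤ m * (1 - ε) := by
    have e1 : Real.exp (a * (m + 1)) = (m * (1 - ε) / ε) ^ ((m+1)/(2*m)) := by
      rw [Real.rpow_def_of_pos hr]
      congr 1
      field_simp [ha]
      rw [ha]; field_simp
    have e2 : (m * (1 - ε) / ε) ^ ((m+1)/(2*m)) ≤ (m * (1 - ε) / ε) ^ (1:ℝ) := by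
      apply Real.rpow_le_rpow_of_exponent_le hr1
      rw [div_le_one (by positivity)]; linarith
    rw [e1]
    calc ε * (m * (1 - ε) / ε) ^ ((m+1)/(2*m)) ≤ ε * (m * (1 - ε) / ε) ^ (1:ℝ) := by
          exact mul_le_mul_of_nonneg_left e2 h0.le
      _ = m * (1 - ε) := by rw [Real.rpow_one]; field_simp
  have step1 : (1 - ε) * Real.exp (-(a * m)) + ε * Real.exp a
      ≤ (1 - ε) * Real.exp (-(b * m)) + ε * Real.exp b := by
    have f3 : Real.exp (-(b*m)) = Real.exp (-(a*m)) * Real.exp ((a-b)*m) := by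
      rw [← Real.exp_add]; congr 1; ring
    have f4 : Real.exp b = Real.exp a * Real.exp (b - a) := by
      rw [← Real.exp_add]; congr 1; ring
    have f1 : (a-b)*m + 1 ≤ Real.exp ((a-b)*m) := Real.add_one_le_exp _
    have f2 : (b-a) + 1 ≤ Real.exp (b-a) := Real.add_one_le_exp _
    have hbr : ε * Real.exp a ≤ m * (1 - ε) * Real.exp (-(a*m)) := by
      have e5 : Real.exp (a*(m+1)) = Real.exp a * Real.exp (a*m) := by
        rw [← Real.exp_add]; congr 1; ring
      have hpos : 0 < Real.exp (a*m) := Real.exp_pos _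
      rw [e5] at hea
      have hc : Real.exp (a*m) * Real.exp (-(a*m)) = 1 := by
        rw [← Real.exp_add]; simp
      calc ε * Real.exp a = ε * (Real.exp a * Real.exp (a*m)) * Real.exp (-(a*m)) := by
            linear_combination (-(ε * Real.exp a)) * hc
        _ ≤ m * (1 - ε) * Real.exp (-(a*m)) :=
            mul_le_mul_of_nonneg_right hea (Real.exp_pos (-(a*m))).le
    have hd : 0 ≤ a - b := by linarith
    have A1 : (1-ε) * Real.exp (-(a*m)) * ((a-b)*m)
        ≤ (1-ε) * (Real.exp (-(b*m)) - Real.exp (-(a*m))) := by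
      rw [f3]
      have h5 : Real.exp (-(a*m)) * ((a-b)*m) ≤ Real.exp (-(a*m)) * (Real.exp ((a-b)*m) - 1) := by
        apply mul_le_mul_of_nonneg_left _ (Real.exp_pos _).le
        linarith
      calc (1-ε) * Real.exp (-(a*m)) * ((a-b)*m)
          = (1-ε) * (Real.exp (-(a*m)) * ((a-b)*m)) := by ring
        _ ≤ (1-ε) * (Real.exp (-(a*m)) * (Real.exp ((a-b)*m) - 1)) :=
            mul_le_mul_of_nonneg_left h5 (by linarith)
        _ = (1-ε) * (Real.exp (-(a*m)) * Real.exp ((a-b)*m) - Real.exp (-(a*m))) := by ring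
    have A2 : ε * (Real.exp a - Real.exp b) ≤ ε * Real.exp a * (a - b) := by
      rw [f4]
      have h6 : Real.exp a * (1 - Real.exp (b-a)) ≤ Real.exp a * (a - b) := by
        apply mul_le_mul_of_nonneg_left _ (Real.exp_pos _).le
        linarith
      calc ε * (Real.exp a - Real.exp a * Real.exp (b-a))
          = ε * (Real.exp a * (1 - Real.exp (b-a))) := by ring
        _ ≤ ε * (Real.exp a * (a - b)) := mul_le_mul_of_nonneg_left h6 h0.le
        _ = ε * Real.exp a * (a - b) := by ring
    have A3 : ε * Real.exp a * (a - b) ≤ (1-ε) * Real.exp (-(a*m)) * ((a-b)*m) := by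
      calc ε * Real.exp a * (a - b) ≤ m * (1 - ε) * Real.exp (-(a*m)) * (a - b) :=
            mul_le_mul_of_nonneg_right hbr hd
        _ = (1-ε) * Real.exp (-(a*m)) * ((a-b)*m) := by ring
    linarith
  -- step 2 : value at b for weight ε ≤ value at b for weight ε₀
  have step2 : (1 - ε) * Real.exp (-(b * m)) + ε * Real.exp b
      ≤ (1 - ε₀) * Real.exp (-(b * m)) + ε₀ * Real.exp b := by
    have e1 : Real.exp (-(b*m)) ≤ 1 := by
      rw [← Real.exp_zero]
      apply Real.exp_le_exp.2; nlinarith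
    have e2 : (1:ℝ) ≤ Real.exp b := by
      rw [← Real.exp_zero]; exact Real.exp_le_exp.2 hb0
    nlinarith
  linarith

/-- The value of `(1-ε)e^{-αm} + εe^{α}` at `α = (1/2m)log(m(1-ε)/ε)` equals `phi`. -/
lemma phi_eq (n : ℕ) (hn : 2 ≤ n) (ε : ℝ) (h0 : 0 < ε) (h1 : ε < 1) :
    (1 - ε) * Real.exp (-(1 / (2 * ((n:ℝ)-1)) * Real.log (((n:ℝ)-1) * (1 - ε) / ε) * ((n:ℝ)-1)))
      + ε * Real.exp (1 / (2 * ((n:ℝ)-1)) * Real.log (((n:ℝ)-1) * (1 - ε) / ε))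
    = phi n ε := by
  have hn2 : (2:ℝ) ≤ (n:ℝ) := by exact_mod_cast hn
  set m : ℝ := (n:ℝ) - 1 with hm
  have hm0 : (0:ℝ) < m := by simp only [hm]; linarith
  have h1' : (0:ℝ) < 1 - ε := by linarith
  have hL : Real.log (m * (1 - ε) / ε)
      = Real.log m + Real.log (1-ε) - Real.log ε := by
    rw [Real.log_div (by positivity) h0.ne', Real.log_mul hm0.ne' h1'.ne']
  have eexp : ∀ (c : ℝ), 0 < c → ∀ (X : ℝ), c * Real.exp X = Real.exp (Real.log c + X) :=
    fun c hc X => by rw [Real.exp_add, Real.exp_log hc]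
  unfold phi
  rw [← hm]
  rw [Real.rpow_def_of_pos hm0, Real.rpow_def_of_pos hm0, Real.rpow_def_of_pos h0,
      Real.rpow_def_of_pos h0, Real.rpow_def_of_pos h1', Real.rpow_def_of_pos h1']
  rw [eexp _ h1' , eexp _ h0, hL]
  rw [← Real.exp_add, ← Real.exp_add, ← Real.exp_add, ← Real.exp_add]
  congr 1
  · congr 1
    field_simp
    ring
  · congr 1
    field_simp
    ring

/-- under the weak-learnability error bounds and the SAMME-type choice of
`α_s`, the product of the normalizers satisfies `Π_{s=1}^k Z_s ≤ φ(1−1/n−γ)^k`. -/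
theorem stmt16 [Fintype P] [Nonempty P] [Fintype A] [DecidableEq A]
    (hn : 2 ≤ Fintype.card A)
    (α : ℕ → ℝ) (h : ℕ → P → A) (y : P → A)
    (k : ℕ) (hk : 1 ≤ k)
    (γ : ℝ) (hγ : γ ∈ Set.Ioo (0 : ℝ) (1 - 1 / (Fintype.card A : ℝ)))
    (hε : ∀ s ∈ Finset.Icc 1 k,
      0 < err (Fintype.card A) α h y s ∧
        err (Fintype.card A) α h y s ≤ 1 - 1 / (Fintype.card A : ℝ) - γ)
    (hα : ∀ s ∈ Finset.Icc 1 k,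
      α s = 1 / (2 * ((Fintype.card A : ℝ) - 1)) *
        Real.log (((Fintype.card A : ℝ) - 1) * (1 - err (Fintype.card A) α h y s) /
          err (Fintype.card A) α h y s)) :
    ∏ s ∈ Finset.Icc 1 k, Zseq (Fintype.card A) α h y s ≤
      phi (Fintype.card A) (1 - 1 / (Fintype.card A : ℝ) - γ) ^ k := by
  set n : ℕ := Fintype.card A with hnn
  have hn2 : (2:ℝ) ≤ (n:ℝ) := by exact_mod_cast hn
  set m : ℝ := (n:ℝ) - 1 with hm
  have hm1 : (1:ℝ) ≤ m := by simp only [hm]; linarith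
  set ε₀ : ℝ := 1 - 1 / (n:ℝ) - γ with hε₀def
  obtain ⟨hγ0, hγ1⟩ := hγ
  have hnpos : (0:ℝ) < (n:ℝ) := by linarith
  have hε₀pos : 0 < ε₀ := by simp only [hε₀def]; linarith
  have hub : ε₀ * (m + 1) ≤ m := by
    have hinv : 1 / (n:ℝ) * (n:ℝ) = 1 := by field_simp
    have : m + 1 = (n:ℝ) := by simp only [hm]; ring
    rw [this]
    simp only [hε₀def]
    nlinarith
  have hbound : ∀ s ∈ Finset.Icc 1 k, Zseq n α h y s ≤ phi n ε₀ := by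
    intro s hs
    obtain ⟨hεpos, hεle⟩ := hε s hs
    rw [Zseq_eq, hα s hs]
    rw [← phi_eq n hn ε₀ hε₀pos (by simp only [hε₀def]; nlinarith [one_div_pos.mpr hnpos])]
    exact key_mono m hm1 _ ε₀ hεpos hεle hub
  have hnonneg : ∀ s ∈ Finset.Icc 1 k, 0 ≤ Zseq n α h y s := by
    intro s _
    exact Finset.sum_nonneg fun q _ =>
      mul_nonneg (dseq_nonneg n α h y s q) (wfac_pos ..).le
  calc ∏ s ∈ Finset.Icc 1 k, Zseq n α h y s
      ≤ ∏ _s ∈ Finset.Icc 1 k, phi n ε₀ := Finset.prod_le_prod hnonneg hbound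
    _ = phi n ε₀ ^ k := by rw [Finset.prod_const, Nat.card_Icc, Nat.add_sub_cancel]

end
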